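/- Let f : (0,∞) → ℝ be locally integrable on (0,∞), locally of bounded variation on (0,∞), with f(t) → 0 as t → ∞, and suppose f is general monotone with constants C > 1 and λ = 2^ν. If the improper integral ∫_1^∞ f(t) dt converges (i.e., the limit of ∫_1^N f(t) dt exists as N → ∞), then t·f(t) → 0 as t → ∞. -/

import Mathlib

open MeasureTheory Filter Set

/-- `f : (0,∞) → ℝ` is general monotone with constants `C` and `l`: locally of bounded
variation on `(0,∞)`, vanishing at infinity, and for every `x > 0` the total variation of `f`
over `[x, 2x]` is at most `C · ∫_{x/l}^{lx} |f(t)|/t dt`. -/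
def GMFun (C l : ℝ) (f : ℝ → ℝ) : Prop :=
  LocallyBoundedVariationOn f (Set.Ioi 0) ∧
  Filter.Tendsto f Filter.atTop (nhds 0) ∧
  ∀ x > (0:ℝ), eVariationOn f (Set.Icc x (2*x)) ≤
    ENNReal.ofReal (C * ∫ t in Set.Ioo (x/l) (l*x), |f t| / t)

namespace AbelOlivierAux

noncomputable def vr (f : ℝ → ℝ) (a b : ℝ) : ℝ := (eVariationOn f (Set.Icc a b)).toReal

variable {f : ℝ → ℝ}



lemma evar_ne_top (hbv : LocallyBoundedVariationOn f (Set.Ioi 0)) {a b : ℝ} (ha : 0 < a) :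
    eVariationOn f (Set.Icc a b) ≠ ⊤ := by
  rcases le_or_gt a b with hab | hab
  · have h := hbv a b ha (ha.trans_le hab)
    have he : Set.Ioi (0:ℝ) ∩ Set.Icc a b = Set.Icc a b :=
      inter_eq_self_of_subset_right (fun x hx => lt_of_lt_of_le ha hx.1)
    rwa [he] at h
  · rw [Set.Icc_eq_empty_of_lt hab, eVariationOn.subsingleton f subsingleton_empty]
    simp

lemma vr_nonneg (f : ℝ → ℝ) (a b : ℝ) : 0 ≤ vr f a b := ENNReal.toReal_nonneg

lemma abs_sub_le_vr (hbv : LocallyBoundedVariationOn f (Set.Ioi 0)) {a b s t : ℝ}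
    (ha : 0 < a) (hs : s ∈ Set.Icc a b) (ht : t ∈ Set.Icc a b) :
    |f s - f t| ≤ vr f a b := by
  have h := eVariationOn.edist_le f hs ht
  have h2 := ENNReal.toReal_mono (evar_ne_top hbv ha) h
  rwa [edist_dist, ENNReal.toReal_ofReal dist_nonneg, Real.dist_eq] at h2

lemma vr_add (hbv : LocallyBoundedVariationOn f (Set.Ioi 0)) {a b c : ℝ}
    (ha : 0 < a) (hab : a ≤ b) (hbc : b ≤ c) :
    vr f a c = vr f a b + vr f b c := by
  have key := eVariationOn.Icc_add_Icc f (s := Set.univ) hab hbc (Set.mem_univ b)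
  simp only [Set.univ_inter] at key
  rw [vr, vr, vr, ← key,
    ENNReal.toReal_add (evar_ne_top hbv ha) (evar_ne_top hbv (ha.trans_le hab))]

lemma sum_vr_le (hbv : LocallyBoundedVariationOn f (Set.Ioi 0)) {a : ℕ → ℝ}
    (hmono : Monotone a) (h0 : 0 < a 0) (n : ℕ) :
    ∑ i ∈ Finset.range n, vr f (a i) (a (i+1)) ≤ vr f (a 0) (a n) := by
  induction n with
  | zero => simpa using vr_nonneg f (a 0) (a 0)
  | succ n ih =>
    rw [Finset.sum_range_succ,
      vr_add hbv h0 (hmono (Nat.zero_le n)) (hmono (Nat.le_succ n))]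
    exact add_le_add_left ih _

lemma intInt (hloc : LocallyIntegrableOn f (Set.Ioi 0) volume) {a b : ℝ}
    (ha : 0 < a) (hab : a ≤ b) : IntervalIntegrable f volume a b := by
  rw [intervalIntegrable_iff_integrableOn_Icc_of_le hab]
  exact hloc.integrableOn_compact_subset
    (fun x hx => lt_of_lt_of_le ha hx.1) isCompact_Icc



lemma cauchy_of_conv (hloc : LocallyIntegrableOn f (Set.Ioi 0) volume)
    (hconv : ∃ I : ℝ, Tendsto (fun N : ℝ => ∫ t in (1:ℝ)..N, f t) atTop (nhds I)) :
    ∀ δ : ℝ, 0 < δ → ∃ X : ℝ, 1 ≤ X ∧ ∀ a b : ℝ, X ≤ a → a ≤ b → |∫ t in a..b, f t| ≤ δ := by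
  obtain ⟨I, hI⟩ := hconv
  intro δ hδ
  obtain ⟨X, hX⟩ := (Metric.tendsto_atTop.1 hI) (δ/2) (by linarith)
  refine ⟨max X 1, le_max_right _ _, ?_⟩
  intro a b hXa hab
  have h1a : (1:ℝ) ≤ a := le_trans (le_max_right X 1) hXa
  have hsplit : (∫ t in (1:ℝ)..a, f t) + ∫ t in a..b, f t = ∫ t in (1:ℝ)..b, f t :=
    intervalIntegral.integral_add_adjacent_intervals (intInt hloc one_pos h1a)
      (intInt hloc (lt_of_lt_of_le one_pos h1a) hab)
  have ha' := hX a (le_trans (le_max_left X 1) hXa)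
  have hb' := hX b (le_trans (le_trans (le_max_left X 1) hXa) hab)
  rw [Real.dist_eq] at ha' hb'
  have heq : ∫ t in a..b, f t =
      ((∫ t in (1:ℝ)..b, f t) - I) - ((∫ t in (1:ℝ)..a, f t) - I) := by linarith
  rw [heq]
  calc |((∫ t in (1:ℝ)..b, f t) - I) - ((∫ t in (1:ℝ)..a, f t) - I)|
      ≤ |(∫ t in (1:ℝ)..b, f t) - I| + |(∫ t in (1:ℝ)..a, f t) - I| := abs_sub _ _
    _ ≤ δ := by linarith

lemma intIntPos (hloc : LocallyIntegrableOn f (Set.Ioi 0) volume) {a b : ℝ}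
    (ha : 0 < a) (hab : a ≤ b) :
    IntervalIntegrable (fun t => max (f t) 0) volume a b := by
  have h := ((intInt hloc ha hab).add (intInt hloc ha hab).abs).smul (1/2 : ℝ)
  have heq : ((1/2 : ℝ) • fun x => f x + |f x|) = fun t => max (f t) 0 := by
    funext t
    simp only [Pi.smul_apply, smul_eq_mul]
    rcases le_total (f t) 0 with h1 | h1
    · rw [max_eq_right h1, abs_of_nonpos h1]; ring
    · rw [max_eq_left h1, abs_of_nonneg h1]; ring
  rwa [heq] at h

lemma intIntNeg (hloc : LocallyIntegrableOn f (Set.Ioi 0) volume) {a b : ℝ}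
    (ha : 0 < a) (hab : a ≤ b) :
    IntervalIntegrable (fun t => max (-f t) 0) volume a b := by
  have h := (((intInt hloc ha hab).neg).add (intInt hloc ha hab).abs).smul (1/2 : ℝ)
  have heq : ((1/2 : ℝ) • fun x => (-f) x + |f x|) = fun t => max (-f t) 0 := by
    funext t
    simp only [Pi.smul_apply, Pi.neg_apply, smul_eq_mul]
    rcases le_total (f t) 0 with h1 | h1
    · rw [max_eq_left (by linarith), abs_of_nonpos h1]; ring
    · rw [max_eq_right (by linarith), abs_of_nonneg h1]; ring
  rwa [heq] at h

lemma pos_piece (hloc : LocallyIntegrableOn f (Set.Ioi 0) volume)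
    (hbv : LocallyBoundedVariationOn f (Set.Ioi 0)) {u v ε : ℝ} (hu : 0 < u) (huv : u ≤ v)
    (hε : 0 ≤ ε) (hcau : |∫ t in u..v, f t| ≤ ε) :
    ∫ t in u..v, max (f t) 0 ≤ ε + (v - u) * vr f u v := by
  by_cases hneg : ∃ w ∈ Set.Icc u v, f w < 0
  · obtain ⟨w, hw, hfw⟩ := hneg
    have hb : ∀ t ∈ Set.Icc u v, max (f t) 0 ≤ vr f u v := by
      intro t ht
      have h2 : f t - f w ≤ vr f u v := (le_abs_self _).trans (abs_sub_le_vr hbv hu ht hw)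
      exact max_le (by linarith) (vr_nonneg f u v)
    have hmono := intervalIntegral.integral_mono_on huv (intIntPos hloc hu huv)
      intervalIntegrable_const hb
    rw [intervalIntegral.integral_const, smul_eq_mul] at hmono
    linarith
  · push_neg at hneg
    have heq : ∫ t in u..v, max (f t) 0 = ∫ t in u..v, f t := by
      apply intervalIntegral.integral_congr
      intro t ht
      rw [Set.uIcc_of_le huv] at ht
      exact max_eq_left (hneg t ht)
    have h2 : (∫ t in u..v, f t) ≤ |∫ t in u..v, f t| := le_abs_self _
    have h3 := mul_nonneg (by linarith : (0:ℝ) ≤ v - u) (vr_nonneg f u v)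
    linarith

lemma neg_piece (hloc : LocallyIntegrableOn f (Set.Ioi 0) volume)
    (hbv : LocallyBoundedVariationOn f (Set.Ioi 0)) {u v ε : ℝ} (hu : 0 < u) (huv : u ≤ v)
    (hε : 0 ≤ ε) (hcau : |∫ t in u..v, f t| ≤ ε) :
    ∫ t in u..v, max (-f t) 0 ≤ ε + (v - u) * vr f u v := by
  by_cases hpos : ∃ w ∈ Set.Icc u v, 0 < f w
  · obtain ⟨w, hw, hfw⟩ := hpos
    have hb : ∀ t ∈ Set.Icc u v, max (-f t) 0 ≤ vr f u v := by
      intro t ht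
      have h2 : f w - f t ≤ vr f u v := (le_abs_self _).trans (abs_sub_le_vr hbv hu hw ht)
      exact max_le (by linarith) (vr_nonneg f u v)
    have hmono := intervalIntegral.integral_mono_on huv (intIntNeg hloc hu huv)
      intervalIntegrable_const hb
    rw [intervalIntegral.integral_const, smul_eq_mul] at hmono
    linarith
  · push_neg at hpos
    have heq : ∫ t in u..v, max (-f t) 0 = ∫ t in u..v, -f t := by
      apply intervalIntegral.integral_congr
      intro t ht
      rw [Set.uIcc_of_le huv] at ht
      exact max_eq_left (by linarith [hpos t ht])
    have h4 : ∫ t in u..v, -f t = -∫ t in u..v, f t := intervalIntegral.integral_neg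
    have h2 : -(∫ t in u..v, f t) ≤ |∫ t in u..v, f t| := neg_le_abs _
    have h3 := mul_nonneg (by linarith : (0:ℝ) ≤ v - u) (vr_nonneg f u v)
    linarith



lemma abs_eq_pos_add_neg (a : ℝ) : |a| = max a 0 + max (-a) 0 := by
  rcases le_total a 0 with h | h
  · rw [abs_of_nonpos h, max_eq_right h, max_eq_left (by linarith)]; ring
  · rw [abs_of_nonneg h, max_eq_left h, max_eq_right (by linarith)]; ring

lemma abs_block (hloc : LocallyIntegrableOn f (Set.Ioi 0) volume)
    (hbv : LocallyBoundedVariationOn f (Set.Ioi 0)) {w ε : ℝ} (hw : 0 < w) {n : ℕ}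
    (hn : 0 < n) (hε : 0 ≤ ε)
    (hcau : ∀ a b : ℝ, w ≤ a → a ≤ b → |∫ t in a..b, f t| ≤ ε) :
    ∫ t in w..(2*w), |f t| ≤ 2*n*ε + 2*(w/n) * vr f w (2*w) := by
  have hncast : (0:ℝ) < n := Nat.cast_pos.2 hn
  set g : ℕ → ℝ := fun i => w + i * (w / n) with hg
  have hwn : 0 < w / n := div_pos hw hncast
  have hmono : Monotone g := by
    intro i j hij
    have : (i:ℝ) ≤ j := Nat.cast_le.2 hij
    simp only [hg]
    nlinarith
  have hg0 : g 0 = w := by simp [hg]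
  have hgn : g n = 2 * w := by
    simp only [hg]
    field_simp
    ring
  have hgpos : ∀ i, 0 < g i := fun i => by
    have : 0 ≤ (i:ℝ) * (w/n) := mul_nonneg (Nat.cast_nonneg i) hwn.le
    simp only [hg]; linarith
  have hstep : ∀ i : ℕ, g (i+1) - g i = w / n := by
    intro i; simp only [hg]; push_cast; ring
  have hwge : ∀ i, w ≤ g i := fun i => hg0 ▸ hmono (Nat.zero_le i)
  -- positive part
  have hintpos : ∀ k, k < n → IntervalIntegrable (fun t => max (f t) 0) volume (g k) (g (k+1)) :=
    fun k _ => intIntPos hloc (hgpos k) (hmono (Nat.le_succ k))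
  have hintneg : ∀ k, k < n → IntervalIntegrable (fun t => max (-f t) 0) volume (g k) (g (k+1)) :=
    fun k _ => intIntNeg hloc (hgpos k) (hmono (Nat.le_succ k))
  have hsum_pos := intervalIntegral.sum_integral_adjacent_intervals hintpos
  have hsum_neg := intervalIntegral.sum_integral_adjacent_intervals hintneg
  have hpiece_pos : ∀ i ∈ Finset.range n,
      (∫ t in (g i)..(g (i+1)), max (f t) 0) ≤ ε + (w/n) * vr f (g i) (g (i+1)) := by
    intro i _
    have h := pos_piece hloc hbv (hgpos i) (hmono (Nat.le_succ i)) hε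
      (hcau _ _ (hwge i) (hmono (Nat.le_succ i)))
    rwa [hstep i] at h
  have hpiece_neg : ∀ i ∈ Finset.range n,
      (∫ t in (g i)..(g (i+1)), max (-f t) 0) ≤ ε + (w/n) * vr f (g i) (g (i+1)) := by
    intro i _
    have h := neg_piece hloc hbv (hgpos i) (hmono (Nat.le_succ i)) hε
      (hcau _ _ (hwge i) (hmono (Nat.le_succ i)))
    rwa [hstep i] at h
  have hvrsum : ∑ i ∈ Finset.range n, vr f (g i) (g (i+1)) ≤ vr f w (2*w) := by
    have := sum_vr_le hbv hmono (hg0 ▸ hw) n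
    rwa [hg0, hgn] at this
  have hbound : ∀ (F : ℝ → ℝ), (∑ i ∈ Finset.range n, ∫ t in (g i)..(g (i+1)), F t)
        = ∫ t in w..(2*w), F t →
      (∀ i ∈ Finset.range n, (∫ t in (g i)..(g (i+1)), F t)
        ≤ ε + (w/n) * vr f (g i) (g (i+1))) →
      (∫ t in w..(2*w), F t) ≤ n*ε + (w/n) * vr f w (2*w) := by
    intro F hFsum hFle
    rw [← hFsum]
    calc ∑ i ∈ Finset.range n, ∫ t in (g i)..(g (i+1)), F t
        ≤ ∑ i ∈ Finset.range n, (ε + (w/n) * vr f (g i) (g (i+1))) :=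
          Finset.sum_le_sum hFle
      _ = n*ε + (w/n) * ∑ i ∈ Finset.range n, vr f (g i) (g (i+1)) := by
          rw [Finset.sum_add_distrib, Finset.sum_const, Finset.card_range,
            ← Finset.mul_sum]
          simp [nsmul_eq_mul]
      _ ≤ n*ε + (w/n) * vr f w (2*w) := by
          have := mul_le_mul_of_nonneg_left hvrsum hwn.le
          linarith
  have hP := hbound _ (by rw [hg0, hgn] at hsum_pos; exact hsum_pos) hpiece_pos
  have hQ := hbound _ (by rw [hg0, hgn] at hsum_neg; exact hsum_neg) hpiece_neg
  have habs : ∫ t in w..(2*w), |f t|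
      = (∫ t in w..(2*w), max (f t) 0) + ∫ t in w..(2*w), max (-f t) 0 := by
    rw [← intervalIntegral.integral_add (intIntPos hloc hw (by linarith))
      (intIntNeg hloc hw (by linarith))]
    apply intervalIntegral.integral_congr
    intro t _
    exact abs_eq_pos_add_neg (f t)
  rw [habs]; linarith



set_option maxHeartbeats 1000000 in
lemma master (hloc : LocallyIntegrableOn f (Set.Ioi 0) volume)
    (hbv : LocallyBoundedVariationOn f (Set.Ioi 0)) {C : ℝ} {ν : ℕ} (hC : 0 < C) (hν : 1 ≤ ν)
    (hGM3 : ∀ x > (0:ℝ), eVariationOn f (Set.Icc x (2*x)) ≤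
      ENNReal.ofReal (C * ∫ t in Set.Ioo (x/2^ν) (2^ν*x), |f t| / t))
    {z ε W : ℝ} {n : ℕ} (hz : 0 < z) (hn : 0 < n) (hε : 0 ≤ ε) (hW : 0 ≤ W)
    (hcauz : ∀ a b : ℝ, z/2^ν ≤ a → a ≤ b → |∫ t in a..b, f t| ≤ ε)
    (hWb : ∀ w : ℝ, z/2^ν ≤ w → w ≤ 2^ν*z → w * vr f w (2*w) ≤ W) :
    z * vr f z (2*z) ≤ (4*C*(2:ℝ)^ν*ν)*(n*ε) + (4*C*(2:ℝ)^ν*ν/n)*W := by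
  set l : ℝ := (2:ℝ)^ν with hldef
  have hl1 : (1:ℝ) < l := one_lt_pow₀ (by norm_num) (by omega)
  have hl0 : (0:ℝ) < l := by linarith
  have hzl : 0 < z / l := div_pos hz hl0
  have hlz : z / l ≤ l * z := by
    rw [div_le_iff₀ hl0]
    have h11 : 1 ≤ l * l := by nlinarith
    nlinarith
  -- nonnegativity of the GM integral
  have hnn : 0 ≤ ∫ t in Set.Ioo (z/l) (l*z), |f t| / t := by
    apply setIntegral_nonneg measurableSet_Ioo
    intro t ht
    exact div_nonneg (abs_nonneg _) (le_of_lt (lt_trans hzl ht.1))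
  -- (a)
  have hvr1 : vr f z (2*z) ≤ C * ∫ t in Set.Ioo (z/l) (l*z), |f t| / t :=
    ENNReal.toReal_le_of_le_ofReal (mul_nonneg hC.le hnn) (hGM3 z hz)
  -- integrabilities
  have hsub : Set.Icc (z/l) (l*z) ⊆ Set.Ioi 0 := fun x hx => lt_of_lt_of_le hzl hx.1
  have hIabs : IntegrableOn (fun t => |f t|) (Set.Icc (z/l) (l*z)) volume :=
    (hloc.integrableOn_compact_subset hsub isCompact_Icc).abs
  have hIabsO : IntegrableOn (fun t => |f t|) (Set.Ioo (z/l) (l*z)) volume :=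
    hIabs.mono_set Set.Ioo_subset_Icc_self
  have hIconst : IntegrableOn (fun t => (l/z) * |f t|) (Set.Ioo (z/l) (l*z)) volume :=
    hIabsO.const_mul (l/z)
  have hIq : IntegrableOn (fun t => |f t| / t) (Set.Ioo (z/l) (l*z)) volume := by
    refine Integrable.mono hIconst ?_ ?_
    · simp only [div_eq_mul_inv]
      exact hIabsO.aestronglyMeasurable.mul
        (Measurable.aestronglyMeasurable (measurable_id.inv))
    · rw [ae_restrict_iff' measurableSet_Ioo]
      refine Eventually.of_forall fun t ht => ?_
      have ht0 : 0 < t := lt_trans hzl ht.1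
      have h1 : z / l ≤ t := le_of_lt ht.1
      rw [Real.norm_eq_abs, Real.norm_eq_abs,
        abs_of_nonneg (div_nonneg (abs_nonneg _) ht0.le),
        abs_of_nonneg (mul_nonneg (div_nonneg hl0.le hz.le) (abs_nonneg _))]
      rw [div_le_iff₀ ht0]
      have h2 : 1 ≤ (l/z) * t := by
        rw [div_le_iff₀ hl0] at h1
        rw [div_mul_eq_mul_div, le_div_iff₀ hz]
        linarith
      nlinarith [abs_nonneg (f t)]
  -- (b)
  have hstep2 : (∫ t in Set.Ioo (z/l) (l*z), |f t| / t)
      ≤ (l/z) * ∫ t in Set.Ioo (z/l) (l*z), |f t| := by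
    have := setIntegral_mono_on hIq hIconst measurableSet_Ioo ?_
    · rwa [integral_const_mul] at this
    · intro t ht
      have ht0 : 0 < t := lt_trans hzl ht.1
      have h1 : z / l ≤ t := le_of_lt ht.1
      rw [div_le_iff₀ ht0]
      have h2 : 1 ≤ (l/z) * t := by
        rw [div_le_iff₀ hl0] at h1
        rw [div_mul_eq_mul_div, le_div_iff₀ hz]
        linarith
      nlinarith [abs_nonneg (f t)]
  -- (c)
  have hIoo_eq : (∫ t in Set.Ioo (z/l) (l*z), |f t|) = ∫ t in (z/l)..(l*z), |f t| := by
    rw [intervalIntegral.integral_of_le hlz, integral_Ioc_eq_integral_Ioo]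
  -- (d) window split
  set u : ℕ → ℝ := fun j => 2^j * (z/l) with hu
  have hupos : ∀ j, 0 < u j := fun j => mul_pos (pow_pos two_pos j) hzl
  have humono : Monotone u := by
    intro i j hij
    simp only [hu]
    exact mul_le_mul_of_nonneg_right (pow_le_pow_right₀ one_le_two hij) hzl.le
  have hu0 : u 0 = z / l := by simp [hu]
  have husucc : ∀ j, u (j+1) = 2 * u j := by
    intro j; simp only [hu]; ring
  have hu2ν : u (2*ν) = l * z := by
    simp only [hu, hldef]
    rw [two_mul, pow_add]
    field_simp
  have hintj : ∀ k, k < 2*ν → IntervalIntegrable (fun t => |f t|) volume (u k) (u (k+1)) :=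
    fun k _ => (intInt hloc (hupos k) (humono (Nat.le_succ k))).abs
  have hsplit := intervalIntegral.sum_integral_adjacent_intervals hintj
  rw [hu0, hu2ν] at hsplit
  -- (e) per-block bounds
  have hblock : ∀ j ∈ Finset.range (2*ν),
      (∫ t in (u j)..(u (j+1)), |f t|) ≤ 2*n*ε + (2/n) * W := by
    intro j hj
    rw [husucc j]
    have hcau' : ∀ a b : ℝ, u j ≤ a → a ≤ b → |∫ t in a..b, f t| ≤ ε := by
      intro a b hua hab
      exact hcauz a b (le_trans (hu0 ▸ humono (Nat.zero_le j)) hua) hab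
    have h := abs_block hloc hbv (hupos j) hn hε hcau'
    have hj2 : u j ≤ l * z := hu2ν ▸ humono (le_of_lt (Finset.mem_range.1 hj))
    have huWb := hWb (u j) (hu0 ▸ humono (Nat.zero_le j)) hj2
    have hn0 : (0:ℝ) < n := Nat.cast_pos.2 hn
    have : 2*(u j/n) * vr f (u j) (2*(u j)) ≤ (2/n) * W := by
      have h3 : 2*((u j)/(n:ℝ)) * vr f (u j) (2*(u j))
          = (2/(n:ℝ)) * (u j * vr f (u j) (2*(u j))) := by ring
      rw [h3]
      exact mul_le_mul_of_nonneg_left huWb (by positivity)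
    linarith
  have hsum_le : (∫ t in (z/l)..(l*z), |f t|) ≤ (2*ν) * (2*n*ε + (2/n) * W) := by
    rw [← hsplit]
    calc ∑ k ∈ Finset.range (2*ν), ∫ t in (u k)..(u (k+1)), |f t|
        ≤ ∑ _k ∈ Finset.range (2*ν), (2*n*ε + (2/n) * W) := Finset.sum_le_sum hblock
      _ = (2*ν) * (2*n*ε + (2/n) * W) := by
          rw [Finset.sum_const, Finset.card_range, nsmul_eq_mul]
          push_cast
          ring
  -- combine
  have hn0 : (0:ℝ) < n := Nat.cast_pos.2 hn
  have hν0 : (0:ℝ) < ν := by exact_mod_cast Nat.pos_of_ne_zero (by omega)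
  have hchain : vr f z (2*z) ≤ C * ((l/z) * ((2*ν) * (2*n*ε + (2/n) * W))) := by
    have h1 : (∫ t in Set.Ioo (z/l) (l*z), |f t|) ≤ (2*ν) * (2*n*ε + (2/n) * W) := by
      rw [hIoo_eq]; exact hsum_le
    have h2 : (∫ t in Set.Ioo (z/l) (l*z), |f t| / t)
        ≤ (l/z) * ((2*ν) * (2*n*ε + (2/n) * W)) := by
      refine hstep2.trans ?_
      exact mul_le_mul_of_nonneg_left h1 (div_nonneg hl0.le hz.le)
    calc vr f z (2*z) ≤ C * ∫ t in Set.Ioo (z/l) (l*z), |f t| / t := hvr1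
      _ ≤ C * ((l/z) * ((2*ν) * (2*n*ε + (2/n) * W))) :=
          mul_le_mul_of_nonneg_left h2 hC.le
  have := mul_le_mul_of_nonneg_left hchain hz.le
  calc z * vr f z (2*z) ≤ z * (C * ((l/z) * ((2*ν) * (2*n*ε + (2/n) * W)))) := this
    _ = (4*C*l*ν)*(n*ε) + (4*C*l*ν/n)*W := by
        field_simp
        ring




set_option maxHeartbeats 1000000 in
lemma vr_le_intabs (hloc : LocallyIntegrableOn f (Set.Ioi 0) volume)
    (hbv : LocallyBoundedVariationOn f (Set.Ioi 0)) {C : ℝ} {ν : ℕ} (hC : 0 < C) (hν : 1 ≤ ν)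
    (hGM3 : ∀ x > (0:ℝ), eVariationOn f (Set.Icc x (2*x)) ≤
      ENNReal.ofReal (C * ∫ t in Set.Ioo (x/2^ν) (2^ν*x), |f t| / t))
    {z : ℝ} (hz : 0 < z) :
    z * vr f z (2*z) ≤ C * (2:ℝ)^ν * ∫ t in (z/2^ν)..((2:ℝ)^ν*z), |f t| := by
  set l : ℝ := (2:ℝ)^ν with hldef
  have hl1 : (1:ℝ) < l := one_lt_pow₀ (by norm_num) (by omega)
  have hl0 : (0:ℝ) < l := by linarith
  have hzl : 0 < z / l := div_pos hz hl0
  have hlz : z / l ≤ l * z := by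
    rw [div_le_iff₀ hl0]
    have h11 : 1 ≤ l * l := by nlinarith
    nlinarith
  have hnn : 0 ≤ ∫ t in Set.Ioo (z/l) (l*z), |f t| / t := by
    apply setIntegral_nonneg measurableSet_Ioo
    intro t ht
    exact div_nonneg (abs_nonneg _) (le_of_lt (lt_trans hzl ht.1))
  have hvr1 : vr f z (2*z) ≤ C * ∫ t in Set.Ioo (z/l) (l*z), |f t| / t :=
    ENNReal.toReal_le_of_le_ofReal (mul_nonneg hC.le hnn) (hGM3 z hz)
  have hsub : Set.Icc (z/l) (l*z) ⊆ Set.Ioi 0 := fun x hx => lt_of_lt_of_le hzl hx.1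
  have hIabs : IntegrableOn (fun t => |f t|) (Set.Icc (z/l) (l*z)) volume :=
    (hloc.integrableOn_compact_subset hsub isCompact_Icc).abs
  have hIabsO : IntegrableOn (fun t => |f t|) (Set.Ioo (z/l) (l*z)) volume :=
    hIabs.mono_set Set.Ioo_subset_Icc_self
  have hIconst : IntegrableOn (fun t => (l/z) * |f t|) (Set.Ioo (z/l) (l*z)) volume :=
    hIabsO.const_mul (l/z)
  have hIq : IntegrableOn (fun t => |f t| / t) (Set.Ioo (z/l) (l*z)) volume := by
    refine Integrable.mono hIconst ?_ ?_
    · simp only [div_eq_mul_inv]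
      exact hIabsO.aestronglyMeasurable.mul
        (Measurable.aestronglyMeasurable (measurable_id.inv))
    · rw [ae_restrict_iff' measurableSet_Ioo]
      refine Eventually.of_forall fun t ht => ?_
      have ht0 : 0 < t := lt_trans hzl ht.1
      have h1 : z / l ≤ t := le_of_lt ht.1
      rw [Real.norm_eq_abs, Real.norm_eq_abs,
        abs_of_nonneg (div_nonneg (abs_nonneg _) ht0.le),
        abs_of_nonneg (mul_nonneg (div_nonneg hl0.le hz.le) (abs_nonneg _))]
      rw [div_le_iff₀ ht0]
      have h2 : 1 ≤ (l/z) * t := by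
        rw [div_le_iff₀ hl0] at h1
        rw [div_mul_eq_mul_div, le_div_iff₀ hz]
        linarith
      nlinarith [abs_nonneg (f t)]
  have hstep2 : (∫ t in Set.Ioo (z/l) (l*z), |f t| / t)
      ≤ (l/z) * ∫ t in Set.Ioo (z/l) (l*z), |f t| := by
    have := setIntegral_mono_on hIq hIconst measurableSet_Ioo ?_
    · rwa [integral_const_mul] at this
    · intro t ht
      have ht0 : 0 < t := lt_trans hzl ht.1
      have h1 : z / l ≤ t := le_of_lt ht.1
      rw [div_le_iff₀ ht0]
      have h2 : 1 ≤ (l/z) * t := by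
        rw [div_le_iff₀ hl0] at h1
        rw [div_mul_eq_mul_div, le_div_iff₀ hz]
        linarith
      nlinarith [abs_nonneg (f t)]
  have hIoo_eq : (∫ t in Set.Ioo (z/l) (l*z), |f t|) = ∫ t in (z/l)..(l*z), |f t| := by
    rw [intervalIntegral.integral_of_le hlz, integral_Ioc_eq_integral_Ioo]
  have habs_nn : 0 ≤ ∫ t in (z/l)..(l*z), |f t| := by
    rw [← hIoo_eq]
    exact setIntegral_nonneg measurableSet_Ioo (fun t _ => abs_nonneg _)
  calc z * vr f z (2*z) ≤ z * (C * ∫ t in Set.Ioo (z/l) (l*z), |f t| / t) :=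
        mul_le_mul_of_nonneg_left hvr1 hz.le
    _ ≤ z * (C * ((l/z) * ∫ t in Set.Ioo (z/l) (l*z), |f t|)) :=
        mul_le_mul_of_nonneg_left (mul_le_mul_of_nonneg_left hstep2 hC.le) hz.le
    _ = C * l * ∫ t in (z/l)..(l*z), |f t| := by
        rw [hIoo_eq]; field_simp

lemma apriori (hloc : LocallyIntegrableOn f (Set.Ioi 0) volume)
    (hbv : LocallyBoundedVariationOn f (Set.Ioi 0)) {C : ℝ} {ν : ℕ} (hC : 0 < C) (hν : 1 ≤ ν)
    (hGM3 : ∀ x > (0:ℝ), eVariationOn f (Set.Icc x (2*x)) ≤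
      ENNReal.ofReal (C * ∫ t in Set.Ioo (x/2^ν) (2^ν*x), |f t| / t))
    {x₀ z : ℝ} (hx₀ : 0 < x₀) (hfb : ∀ t : ℝ, x₀ ≤ t → |f t| ≤ 1)
    (hz : (2:ℝ)^ν * x₀ ≤ z) :
    z * vr f z (2*z) ≤ C * ((2:ℝ)^ν)^2 * z := by
  set l : ℝ := (2:ℝ)^ν with hldef
  have hl1 : (1:ℝ) < l := one_lt_pow₀ (by norm_num) (by omega)
  have hl0 : (0:ℝ) < l := by linarith
  have hz0 : 0 < z := lt_of_lt_of_le (mul_pos hl0 hx₀) hz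
  have hzl : 0 < z / l := div_pos hz0 hl0
  have hx₀zl : x₀ ≤ z / l := by
    rw [le_div_iff₀ hl0]
    nlinarith
  have hlz : z / l ≤ l * z := by
    rw [div_le_iff₀ hl0]
    have h11 : 1 ≤ l * l := by nlinarith
    nlinarith
  have h1 := vr_le_intabs hloc hbv hC hν hGM3 hz0
  have h2 : (∫ t in (z/l)..(l*z), |f t|) ≤ ∫ t in (z/l)..(l*z), (1:ℝ) := by
    apply intervalIntegral.integral_mono_on hlz ((intInt hloc hzl hlz).abs)
      intervalIntegrable_const
    intro t ht
    exact hfb t (le_trans hx₀zl ht.1)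
  rw [intervalIntegral.integral_const, smul_eq_mul, mul_one] at h2
  have h3 : l * z - z / l ≤ l * z := by
    have := hzl.le; linarith
  calc z * vr f z (2*z) ≤ C * l * ∫ t in (z/l)..(l*z), |f t| := h1
    _ ≤ C * l * (l * z) := mul_le_mul_of_nonneg_left (h2.trans h3)
        (mul_nonneg hC.le hl0.le)
    _ = C * l^2 * z := by ring

lemma tf_bound (hloc : LocallyIntegrableOn f (Set.Ioi 0) volume)
    (hbv : LocallyBoundedVariationOn f (Set.Ioi 0)) {z : ℝ} (hz : 0 < z) :
    |z * f z| ≤ |∫ t in z..(2*z), f t| + z * vr f z (2*z) := by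
  have h2z : z ≤ 2*z := by linarith
  have hdiff : z * f z - ∫ t in z..(2*z), f t = ∫ t in z..(2*z), (f z - f t) := by
    rw [intervalIntegral.integral_sub intervalIntegrable_const (intInt hloc hz h2z),
      intervalIntegral.integral_const, smul_eq_mul]
    ring_nf
  have hbnd : ‖∫ t in z..(2*z), (f z - f t)‖ ≤ vr f z (2*z) * |2*z - z| := by
    apply intervalIntegral.norm_integral_le_of_norm_le_const
    intro x hx
    rw [Set.uIoc_of_le h2z] at hx
    rw [Real.norm_eq_abs]
    exact abs_sub_le_vr hbv hz (Set.mem_Icc.2 ⟨le_refl z, h2z⟩)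
      (Set.mem_Icc.2 ⟨hx.1.le, hx.2⟩)
  rw [Real.norm_eq_abs] at hbnd
  have h4 : |2*z - z| = z := by rw [abs_of_nonneg (by linarith)]; ring
  rw [h4] at hbnd
  calc |z * f z| = |(∫ t in z..(2*z), f t) + (z * f z - ∫ t in z..(2*z), f t)| := by ring_nf
    _ ≤ |∫ t in z..(2*z), f t| + |z * f z - ∫ t in z..(2*z), f t| := abs_add_le _ _
    _ ≤ |∫ t in z..(2*z), f t| + z * vr f z (2*z) := by
        rw [hdiff]
        have := hbnd
        nlinarith [abs_nonneg (∫ t in z..(2*z), (f z - f t))]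


end AbelOlivierAux

open AbelOlivierAux

set_option maxHeartbeats 1000000 in
/-- Abel–Olivier test for general monotone functions: if `f` is general monotone (with
constants `C > 1` and `λ = 2^ν`), locally integrable on `(0,∞)`, and the improper integral
`∫_1^∞ f(t) dt` converges, then `t·f(t) → 0` as `t → ∞`. -/
theorem abel_olivier_GMFun (f : ℝ → ℝ) (C : ℝ) (hC : 1 < C) (ν : ℕ) (hν : 1 ≤ ν)
    (hloc : LocallyIntegrableOn f (Set.Ioi 0))
    (hGM : GMFun C (2^ν) f)
    (hconv : ∃ I : ℝ, Tendsto (fun N : ℝ => ∫ t in (1:ℝ)..N, f t) atTop (nhds I)) :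
    Tendsto (fun t : ℝ => t * f t) atTop (nhds 0) := by
  obtain ⟨hbv, hf0, hGM3⟩ := hGM
  have hC0 : (0:ℝ) < C := by linarith
  have hl1 : (1:ℝ) < 2^ν := one_lt_pow₀ (by norm_num) (by omega)
  set l : ℝ := 2^ν with hldef
  have hl0 : (0:ℝ) < l := by linarith
  have hν0 : (0:ℝ) < (ν:ℝ) := by exact_mod_cast Nat.pos_of_ne_zero (by omega)
  -- |f| ≤ 1 beyond X₀
  obtain ⟨X₀, hX₀⟩ := (Metric.tendsto_atTop.1 hf0) 1 one_pos
  obtain ⟨X₁, hX₁1, hX₁⟩ := cauchy_of_conv hloc hconv 1 one_pos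
  set x₀ : ℝ := max (max X₀ X₁) 1 with hx₀def
  have hx₀1 : (1:ℝ) ≤ x₀ := le_max_right _ _
  have hx₀0 : (0:ℝ) < x₀ := lt_of_lt_of_le one_pos hx₀1
  have hfb : ∀ t : ℝ, x₀ ≤ t → |f t| ≤ 1 := by
    intro t ht
    have h := hX₀ t (le_trans (le_trans (le_max_left X₀ X₁) (le_max_left _ 1)) ht)
    rw [Real.dist_eq, sub_zero] at h
    linarith
  have hcau1 : ∀ a b : ℝ, x₀ ≤ a → a ≤ b → |∫ t in a..b, f t| ≤ 1 := fun a b ha hab =>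
    hX₁ a b (le_trans (le_trans (le_max_right X₀ X₁) (le_max_left _ 1)) ha) hab
  -- constants
  set n₀ : ℕ := ⌈8*C*l^3*(ν:ℝ)⌉₊ with hn₀def
  have h8pos : (0:ℝ) < 8*C*l^3*(ν:ℝ) :=
    mul_pos (mul_pos (mul_pos (by norm_num) hC0) (pow_pos hl0 3)) hν0
  have hn₀pos : 0 < n₀ := Nat.ceil_pos.2 h8pos
  have hn₀R : (0:ℝ) < (n₀:ℝ) := Nat.cast_pos.2 hn₀pos
  have hn₀ge : 8*C*l^3*(ν:ℝ) ≤ (n₀:ℝ) := Nat.le_ceil _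
  set E₀ : ℝ := 2*(4*C*l*(ν:ℝ)*(n₀:ℝ)) with hE₀def
  have hK₁0 : (0:ℝ) < 4*C*l*(ν:ℝ) :=
    mul_pos (mul_pos (mul_pos (by norm_num) hC0) hl0) hν0
  have hE₀0 : (0:ℝ) ≤ E₀ := by
    rw [hE₀def]
    nlinarith [mul_pos hK₁0 hn₀R]
  have hq : 4*C*l*(ν:ℝ)/(n₀:ℝ) ≤ 1/(2*l^2) := by
    rw [div_le_div_iff₀ hn₀R (mul_pos two_pos (pow_pos hl0 2))]
    have e : 4*C*l*(ν:ℝ)*(2*l^2) = 8*C*l^3*(ν:ℝ) := by ring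
    rw [e, one_mul]
    exact hn₀ge
  -- phase 1
  have phase1 : ∀ k : ℕ, ∀ z : ℝ, l^(k+1) * x₀ ≤ z →
      z * vr f z (2*z) ≤ E₀ + C*l^2*z/(2*l)^k := by
    intro k
    induction k with
    | zero =>
      intro z hz
      have hz' : l * x₀ ≤ z := by
        have : l^(0+1) = l := by rw [pow_one]
        rwa [this] at hz
      have h := apriori hloc hbv hC0 hν hGM3 hx₀0 hfb hz'
      rw [pow_zero, div_one]
      have : C * l^2 * z = C * l^2 * z := rfl
      calc z * vr f z (2*z) ≤ C * l^2 * z := h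
        _ ≤ E₀ + C*l^2*z := by linarith
    | succ k ih =>
      intro z hz
      have hpk2 : (0:ℝ) < l^(k+1+1) * x₀ := mul_pos (pow_pos hl0 _) hx₀0
      have hz0 : 0 < z := lt_of_lt_of_le hpk2 hz
      have hzl_ge : l^(k+1) * x₀ ≤ z / l := by
        rw [le_div_iff₀ hl0]
        calc l^(k+1)*x₀*l = l^(k+1+1)*x₀ := by rw [pow_succ]; ring
          _ ≤ z := hz
      have hpow1 : (1:ℝ) ≤ l^(k+1) := one_le_pow₀ hl1.le
      have hx₀zl : x₀ ≤ z / l := by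
        refine le_trans ?_ hzl_ge
        nlinarith
      have hcauz : ∀ a b : ℝ, z/l ≤ a → a ≤ b → |∫ t in a..b, f t| ≤ 1 :=
        fun a b ha hab => hcau1 a b (le_trans hx₀zl ha) hab
      have hpk0 : (0:ℝ) < (2*l)^k := pow_pos (by linarith) k
      have hW0 : (0:ℝ) ≤ E₀ + C*l^2*(l*z)/(2*l)^k := by
        have : (0:ℝ) ≤ C*l^2*(l*z)/(2*l)^k :=
          div_nonneg (mul_nonneg (mul_nonneg hC0.le (pow_pos hl0 2).le)
            (mul_nonneg hl0.le hz0.le)) hpk0.le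
        linarith
      have hWb : ∀ w : ℝ, z/l ≤ w → w ≤ l*z → w * vr f w (2*w) ≤ E₀ + C*l^2*(l*z)/(2*l)^k := by
        intro w hw1 hw2
        have hih := ih w (le_trans hzl_ge hw1)
        have h2 : C*l^2*w/(2*l)^k ≤ C*l^2*(l*z)/(2*l)^k := by
          apply (div_le_div_iff_of_pos_right hpk0).2
          exact mul_le_mul_of_nonneg_left hw2 (le_of_lt (mul_pos hC0 (pow_pos hl0 2)))
        linarith
      have hM := master hloc hbv hC0 hν hGM3 hz0 hn₀pos zero_le_one hW0 hcauz hWb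
      have h7 : 4*C*l*(ν:ℝ)*((n₀:ℝ)*1) = E₀/2 := by rw [hE₀def]; ring
      have h5 : (4*C*l*(ν:ℝ)/(n₀:ℝ)) * (E₀ + C*l^2*(l*z)/(2*l)^k)
          ≤ (1/(2*l^2)) * (E₀ + C*l^2*(l*z)/(2*l)^k) :=
        mul_le_mul_of_nonneg_right hq hW0
      have h6 : (1/(2*l^2)) * (E₀ + C*l^2*(l*z)/(2*l)^k)
          ≤ E₀/2 + C*l^2*z/(2*l)^(k+1) := by
        have eB : (1/(2*l^2)) * (C*l^2*(l*z)/(2*l)^k) = C*l^2*z/(2*l)^(k+1) := by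
          rw [pow_succ]
          field_simp
          ring
        have eA : (1/(2*l^2)) * E₀ ≤ E₀/2 := by
          rw [one_div, inv_mul_eq_div]
          exact div_le_div_of_nonneg_left hE₀0 two_pos (by nlinarith)
        calc (1/(2*l^2)) * (E₀ + C*l^2*(l*z)/(2*l)^k)
            = (1/(2*l^2))*E₀ + (1/(2*l^2))*(C*l^2*(l*z)/(2*l)^k) := by ring
          _ ≤ E₀/2 + C*l^2*z/(2*l)^(k+1) := by rw [eB]; linarith
      linarith
  -- boundedness
  have hbound : ∀ z : ℝ, l*x₀ ≤ z → z * vr f z (2*z) ≤ E₀ + C*l^4*x₀ := by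
    intro z hz
    have hlx₀ : (0:ℝ) < l*x₀ := mul_pos hl0 hx₀0
    have hx : (1:ℝ) ≤ z/(l*x₀) := (le_div_iff₀ hlx₀).2 (by linarith)
    obtain ⟨k, hk1, hk2⟩ := exists_nat_pow_near hx hl1
    have hzk : l^(k+1)*x₀ ≤ z := by
      have := (le_div_iff₀ hlx₀).1 hk1
      calc l^(k+1)*x₀ = l^k*(l*x₀) := by rw [pow_succ]; ring
        _ ≤ z := this
    have hz2 : z ≤ l^(k+2)*x₀ := by
      have := (div_lt_iff₀ hlx₀).1 hk2
      have e : l^(k+1)*(l*x₀) = l^(k+2)*x₀ := by rw [pow_succ, pow_succ]; ring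
      linarith [e ▸ this]
    have hp := phase1 k z hzk
    have hsecond : C*l^2*z/(2*l)^k ≤ C*l^4*x₀ := by
      have hpk0 : (0:ℝ) < (2*l)^k := pow_pos (by linarith) k
      rw [div_le_iff₀ hpk0]
      have h2k1 : (1:ℝ) ≤ 2^k := one_le_pow₀ one_le_two
      have hlk : (0:ℝ) < l^k := pow_pos hl0 k
      have e1 : l^(k+2) = l^k*l^2 := pow_add l k 2
      calc C*l^2*z ≤ C*l^2*(l^(k+2)*x₀) :=
            mul_le_mul_of_nonneg_left hz2 (le_of_lt (mul_pos hC0 (pow_pos hl0 2)))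
        _ = (C*l^4*x₀)*l^k := by rw [e1]; ring
        _ ≤ (C*l^4*x₀)*(2^k*l^k) := by
            apply mul_le_mul_of_nonneg_left _
              (le_of_lt (mul_pos (mul_pos hC0 (pow_pos hl0 4)) hx₀0))
            nlinarith
        _ = C*l^4*x₀*(2*l)^k := by rw [mul_pow]
    linarith
  have hR0 : (0:ℝ) ≤ E₀ + C*l^4*x₀ := by
    nlinarith [mul_pos (mul_pos hC0 (pow_pos hl0 4)) hx₀0]
  -- conclusion
  rw [Metric.tendsto_atTop]
  intro ε hε
  set K₁ : ℝ := 4*C*l*(ν:ℝ) with hK₁def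
  set R : ℝ := E₀ + C*l^4*x₀ with hRdef
  set n₁ : ℕ := ⌈4*K₁*R/ε⌉₊ + 1 with hn₁def
  have hn₁pos : 0 < n₁ := Nat.succ_pos _
  have hn₁R : (0:ℝ) < (n₁:ℝ) := Nat.cast_pos.2 hn₁pos
  have hn₁ge : 4*K₁*R/ε ≤ (n₁:ℝ) := by
    calc 4*K₁*R/ε ≤ (⌈4*K₁*R/ε⌉₊ : ℝ) := Nat.le_ceil _
      _ ≤ (n₁:ℝ) := by rw [hn₁def]; push_cast; linarith
  set ε₂ : ℝ := (ε/4)/(K₁*(n₁:ℝ)+1) with hε₂def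
  have hK₁n₁0 : (0:ℝ) < K₁*(n₁:ℝ)+1 := by nlinarith [mul_pos hK₁0 hn₁R]
  have hε₂0 : 0 < ε₂ := div_pos (by linarith) hK₁n₁0
  have hε₂le : ε₂ ≤ ε/4 := by
    rw [hε₂def]
    exact div_le_self (by linarith) (by nlinarith [mul_pos hK₁0 hn₁R])
  obtain ⟨X₂, hX₂1, hX₂⟩ := cauchy_of_conv hloc hconv ε₂ hε₂0
  refine ⟨max (l*(l*x₀)) (l*X₂), ?_⟩
  intro z hzge
  have hz1 : l*(l*x₀) ≤ z := le_trans (le_max_left _ _) hzge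
  have hz2 : l*X₂ ≤ z := le_trans (le_max_right _ _) hzge
  have hz0 : 0 < z := lt_of_lt_of_le (mul_pos hl0 (mul_pos hl0 hx₀0)) hz1
  have hzl1 : l*x₀ ≤ z/l := (le_div_iff₀ hl0).2 (by nlinarith)
  have hzl2 : X₂ ≤ z/l := (le_div_iff₀ hl0).2 (by nlinarith)
  have hcauz : ∀ a b : ℝ, z/l ≤ a → a ≤ b → |∫ t in a..b, f t| ≤ ε₂ :=
    fun a b ha hab => hX₂ a b (le_trans hzl2 ha) hab
  have hWb : ∀ w : ℝ, z/l ≤ w → w ≤ l*z → w * vr f w (2*w) ≤ R :=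
    fun w hw1 _ => hbound w (le_trans hzl1 hw1)
  have hM := master hloc hbv hC0 hν hGM3 hz0 hn₁pos hε₂0.le hR0 hcauz hWb
  -- K₁*(n₁*ε₂) ≤ ε/4
  have hfirst : K₁*((n₁:ℝ)*ε₂) ≤ ε/4 := by
    have hepseq : ε₂*(K₁*(n₁:ℝ)+1) = ε/4 := by
      rw [hε₂def]; field_simp
    nlinarith
  have hsecond : (K₁/(n₁:ℝ))*R ≤ ε/4 := by
    rw [div_mul_eq_mul_div, div_le_iff₀ hn₁R]
    have h1 : ε/4*(4*K₁*R/ε) = K₁*R := by field_simp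
    calc K₁*R = ε/4*(4*K₁*R/ε) := h1.symm
      _ ≤ ε/4*(n₁:ℝ) := mul_le_mul_of_nonneg_left hn₁ge (by linarith)
  have hzvr : z * vr f z (2*z) ≤ ε/2 := by
    calc z * vr f z (2*z) ≤ K₁*((n₁:ℝ)*ε₂) + (K₁/(n₁:ℝ))*R := hM
      _ ≤ ε/4 + ε/4 := add_le_add hfirst hsecond
      _ = ε/2 := by ring
  have hintz : |∫ t in z..(2*z), f t| ≤ ε₂ := by
    apply hcauz z (2*z) _ (by linarith)
    calc z/l ≤ z/1 := by
          apply div_le_div_of_nonneg_left hz0.le one_pos (by linarith)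
      _ = z := div_one z
  have htf := tf_bound hloc hbv hz0
  rw [Real.dist_eq, sub_zero]
  calc |z * f z| ≤ |∫ t in z..(2*z), f t| + z * vr f z (2*z) := htf
    _ ≤ ε₂ + ε/2 := add_le_add hintz hzvr
    _ ≤ ε/4 + ε/2 := by linarith
    _ < ε := by linarith
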